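/- Let $A \geq 1$ be an integer and define $S = \{ p/q \in \mathbb{Q} : p \geq 1,\ q \neq 0,\ \exists a \in \mathbb{Z},\ |a| \leq A,\ \exists b \in \{1,-1\},\ p \mid (aq - b) \} \subset \mathbb{R}$. Then $S$ is nowhere dense in $\mathbb{R}$. -/

import Mathlib

lemma exists_pos_le_dist' (x : ℝ) (F : Finset ℝ) (h : ∀ f ∈ F, f ≠ x) :
    ∃ δ > 0, ∀ f ∈ F, δ ≤ |x - f| := by
  rcases F.eq_empty_or_nonempty with rfl | hne
  · exact ⟨1, one_pos, by simp⟩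
  · refine ⟨F.inf' hne (fun f => |x - f|), ?_, fun f hf => Finset.inf'_le _ hf⟩
    rw [gt_iff_lt, Finset.lt_inf'_iff]
    exact fun f hf => abs_pos.mpr (sub_ne_zero.mpr (Ne.symm (h f hf)))

lemma aux17 (A : ℤ) (hA : 1 ≤ A) (x : ℝ) (hx : Irrational x) :
    x ∉ closure {x : ℝ | ∃ p q : ℤ, 1 ≤ p ∧ q ≠ 0 ∧ x = (p : ℝ) / (q : ℝ) ∧
      ∃ a : ℤ, |a| ≤ A ∧ ∃ b : ℤ, (b = 1 ∨ b = -1) ∧ p ∣ (a * q - b)} := by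
  have hx0 : x ≠ 0 := by simpa using hx.ne_int 0
  set ε : ℝ := |x| / 2 with hεdef
  have hε : 0 < ε := by
    have : 0 < |x| := abs_pos.mpr hx0
    linarith
  set K : ℤ := ⌈(A : ℝ) / ε⌉ + 1 with hKdef
  have hK : (A : ℝ) / ε + 1 ≤ (K : ℝ) := by
    push_cast [hKdef]
    have := Int.le_ceil ((A : ℝ) / ε)
    linarith
  -- finite set of candidate limit points a/k
  set F : Finset ℝ :=
    ((Finset.Icc (-A) A) ×ˢ (Finset.Icc (-K) K)).image
      (fun p => (p.1 : ℝ) / (p.2 : ℝ)) with hFdef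
  have hFne : ∀ f ∈ F, f ≠ x := by
    intro f hf
    rw [hFdef, Finset.mem_image] at hf
    obtain ⟨⟨a, k⟩, _, rfl⟩ := hf
    rcases eq_or_ne k 0 with rfl | hk
    · simpa using (Ne.symm hx0)
    · intro hcontra
      apply hx
      exact ⟨(a : ℚ) / (k : ℚ), by push_cast; exact hcontra⟩
  obtain ⟨δ1, hδ1pos, hδ1⟩ := exists_pos_le_dist' x F hFne
  set N : ℤ := max 2 ⌈2 / δ1⌉ with hNdef
  have hN2 : (2 : ℤ) ≤ N := le_max_left _ _
  have hNδ : 2 / δ1 ≤ (N : ℝ) := by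
    have h1 : 2 / δ1 ≤ (⌈2 / δ1⌉ : ℝ) := Int.le_ceil _
    have h2 : (⌈2 / δ1⌉ : ℤ) ≤ N := le_max_right _ _
    have : ((⌈2 / δ1⌉ : ℤ) : ℝ) ≤ (N : ℝ) := by exact_mod_cast h2
    linarith
  set P : ℤ := (⌈|x|⌉ + 1) * N with hPdef
  set G : Finset ℝ :=
    ((Finset.Icc 1 P) ×ˢ (Finset.Icc (-N) N)).image
      (fun p => (p.1 : ℝ) / (p.2 : ℝ)) with hGdef
  have hGne : ∀ f ∈ G, f ≠ x := by
    intro f hf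
    rw [hGdef, Finset.mem_image] at hf
    obtain ⟨⟨p, q⟩, _, rfl⟩ := hf
    rcases eq_or_ne q 0 with rfl | hq
    · simpa using (Ne.symm hx0)
    · intro hcontra
      apply hx
      exact ⟨(p : ℚ) / (q : ℚ), by push_cast; exact hcontra⟩
  obtain ⟨δ2, hδ2pos, hδ2⟩ := exists_pos_le_dist' x G hGne
  set r : ℝ := min (min ε 1) (min (δ1 / 2) δ2) with hrdef
  have hr : 0 < r := by
    simp only [hrdef, lt_min_iff]
    exact ⟨⟨hε, one_pos⟩, ⟨by linarith, hδ2pos⟩⟩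
  have hrε : r ≤ ε := le_trans (min_le_left _ _) (min_le_left _ _)
  have hr1 : r ≤ 1 := le_trans (min_le_left _ _) (min_le_right _ _)
  have hrδ1 : r ≤ δ1 / 2 := le_trans (min_le_right _ _) (min_le_left _ _)
  have hrδ2 : r ≤ δ2 := le_trans (min_le_right _ _) (min_le_right _ _)
  intro hmem
  obtain ⟨y, hyS, hdist⟩ := Metric.mem_closure_iff.mp hmem r hr
  obtain ⟨p, q, hp, hq, rfl, a, ha, b, hb, hdvd⟩ := hyS
  rw [Real.dist_eq] at hdist
  have hq' : (q : ℝ) ≠ 0 := Int.cast_ne_zero.mpr hq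
  have hqpos : (0 : ℝ) < |(q : ℝ)| := abs_pos.mpr hq'
  have hp' : (0 : ℝ) < (p : ℝ) := by exact_mod_cast hp
  have hyabs : |(p : ℝ) / q| = (p : ℝ) / |(q : ℝ)| := by
    rw [abs_div, abs_of_pos hp']
  have habsxy : |x| - |(p : ℝ) / q| ≤ |x - (p : ℝ) / q| := abs_sub_abs_le_abs_sub _ _
  have hylb : ε < |(p : ℝ) / q| := by
    have : |x - (p : ℝ) / q| < ε := lt_of_lt_of_le hdist hrε
    have hxε : |x| = 2 * ε := by rw [hεdef]; ring
    linarith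
  have hyub : |(p : ℝ) / q| < |x| + 1 := by
    have h2 : |(p : ℝ) / q| - |x| ≤ |x - (p : ℝ) / q| := by
      have := abs_sub_abs_le_abs_sub ((p : ℝ) / q) x
      rwa [abs_sub_comm] at this
    have : |x - (p : ℝ) / q| < 1 := lt_of_lt_of_le hdist hr1
    linarith
  by_cases hcase : |q| ≤ N
  · -- small q case: y lies in the finite set G
    have hqabs : (|q| : ℝ) = |(q : ℝ)| := by push_cast [Int.cast_abs]; ring
    have hPbound : (p : ℝ) ≤ (P : ℝ) := by
      have h1 : (p : ℝ) = |(p : ℝ) / q| * |(q : ℝ)| := by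
        rw [hyabs, div_mul_cancel₀ _ (ne_of_gt hqpos)]
      have hx1 : |x| + 1 ≤ ((⌈|x|⌉ : ℝ) + 1) := by
        have := Int.le_ceil |x|
        linarith
      have hqN : |(q : ℝ)| ≤ (N : ℝ) := by
        rw [← hqabs]; exact_mod_cast hcase
      have hNpos : (0 : ℝ) < (N : ℝ) := by exact_mod_cast lt_of_lt_of_le (by norm_num) hN2
      have hceil : (0 : ℝ) ≤ (⌈|x|⌉ : ℝ) + 1 := by
        have h0 : (0:ℝ) ≤ |x| := abs_nonneg x
        have := Int.le_ceil |x|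
        linarith
      have : (p : ℝ) ≤ (|x| + 1) * (N : ℝ) := by
        calc (p : ℝ) = |(p : ℝ) / q| * |(q : ℝ)| := h1
          _ ≤ (|x| + 1) * |(q : ℝ)| := by
              apply mul_le_mul_of_nonneg_right (le_of_lt hyub) (le_of_lt hqpos)
          _ ≤ (|x| + 1) * (N : ℝ) := by
              apply mul_le_mul_of_nonneg_left hqN
              have : (0:ℝ) ≤ |x| := abs_nonneg x
              linarith
      calc (p : ℝ) ≤ (|x| + 1) * (N : ℝ) := this
        _ ≤ ((⌈|x|⌉ : ℝ) + 1) * (N : ℝ) := by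
            apply mul_le_mul_of_nonneg_right hx1 (le_of_lt hNpos)
        _ = (P : ℝ) := by rw [hPdef]; push_cast; ring
    have hpP : p ≤ P := by exact_mod_cast hPbound
    have hmemG : (p : ℝ) / q ∈ G := by
      rw [hGdef, Finset.mem_image]
      refine ⟨(p, q), ?_, rfl⟩
      rw [Finset.mem_product, Finset.mem_Icc, Finset.mem_Icc]
      obtain ⟨h1, h2⟩ := abs_le.mp hcase
      exact ⟨⟨hp, hpP⟩, h1, h2⟩
    have := hδ2 _ hmemG
    linarith [lt_of_lt_of_le hdist hrδ2]
  · -- big q case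
    push_neg at hcase
    obtain ⟨k, hk⟩ := hdvd
    have hb1 : |b| = 1 := by rcases hb with rfl | rfl <;> norm_num
    have hqN1 : N + 1 ≤ |q| := hcase
    have hk0 : k ≠ 0 := by
      rintro rfl
      rw [mul_zero] at hk
      have hab : a * q = b := by linarith [hk]
      have ha0 : a ≠ 0 := by
        rintro rfl
        rw [zero_mul] at hab
        rcases hb with rfl | rfl <;> omega
      have h1 : 1 ≤ |a| := Int.one_le_abs ha0
      have h2 : |a * q| = 1 := by rw [hab]; exact hb1
      rw [abs_mul] at h2
      have hq1 : |q| ≤ 1 := by nlinarith [abs_nonneg q, abs_nonneg a]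
      omega
    -- cast the divisibility equation to ℝ
    have hkR : (a : ℝ) * q - b = p * k := by exact_mod_cast hk
    have hkK : |k| ≤ K := by
      have h1 : (|k| : ℝ) * p = |(a : ℝ) * q - b| := by
        rw [hkR, abs_mul, abs_of_pos hp']
        push_cast [Int.cast_abs]
        ring
      have h2 : |(a : ℝ) * q - b| ≤ (A : ℝ) * |(q : ℝ)| + 1 := by
        have hbR : |(b : ℝ)| = 1 := by exact_mod_cast hb1
        have haR : |(a : ℝ)| ≤ (A : ℝ) := by
          rw [← Int.cast_abs]; exact_mod_cast ha
        calc |(a : ℝ) * q - b| ≤ |(a : ℝ) * q| + |(b : ℝ)| := abs_sub _ _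
          _ = |(a : ℝ)| * |(q : ℝ)| + 1 := by rw [abs_mul, hbR]
          _ ≤ (A : ℝ) * |(q : ℝ)| + 1 := by
              have := mul_le_mul_of_nonneg_right haR (le_of_lt hqpos)
              linarith
      -- ε * |q| ≤ p
      have h3 : ε * |(q : ℝ)| ≤ (p : ℝ) := by
        have := hylb
        rw [hyabs] at this
        have h3' := (lt_div_iff₀ hqpos).mp this
        linarith
      have hA' : (0 : ℝ) < (A : ℝ) := by exact_mod_cast lt_of_lt_of_le one_pos hA
      have h4 : (|k| : ℝ) * p ≤ ((A : ℝ) / ε + 1) * p := by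
        have hq1p : (1 : ℝ) ≤ (p : ℝ) := by exact_mod_cast hp
        have : (A : ℝ) * |(q : ℝ)| ≤ ((A : ℝ) / ε) * p := by
          have := mul_le_mul_of_nonneg_left h3 (le_of_lt (div_pos hA' hε))
          calc (A : ℝ) * |(q:ℝ)| = ((A:ℝ)/ε) * (ε * |(q:ℝ)|) := by field_simp
            _ ≤ ((A:ℝ)/ε) * p := this
        linarith [h1, h2]
      have h5 : (|k| : ℝ) ≤ (A : ℝ) / ε + 1 := le_of_mul_le_mul_right (by linarith) hp'
      have : (|k| : ℝ) ≤ (K : ℝ) := le_trans h5 hK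
      exact_mod_cast this
    have hk' : (k : ℝ) ≠ 0 := Int.cast_ne_zero.mpr hk0
    have hkeq : (p : ℝ) / q - (a : ℝ) / k = -(b : ℝ) / (q * k) := by
      field_simp
      linarith [hkR]
    have hkabs : |(p : ℝ) / q - (a : ℝ) / k| = 1 / (|(q : ℝ)| * |(k : ℝ)|) := by
      rw [hkeq, abs_div, abs_neg, abs_mul]
      have hbR : |(b : ℝ)| = 1 := by exact_mod_cast hb1
      rw [hbR]
    have hqbig : 2 / δ1 ≤ |(q : ℝ)| := by
      have h1 : (N : ℝ) ≤ |(q : ℝ)| := by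
        have : (N : ℝ) + 1 ≤ (|q| : ℝ) := by exact_mod_cast hqN1
        rw [← Int.cast_abs]
        push_cast
        have h2 : ((|q| : ℤ) : ℝ) = |(q : ℝ)| := by push_cast [Int.cast_abs]; ring
        rw [← h2]
        exact_mod_cast by omega
      linarith [hNδ]
    have hsmall : |(p : ℝ) / q - (a : ℝ) / k| ≤ δ1 / 2 := by
      rw [hkabs]
      have hk1 : (1 : ℝ) ≤ |(k : ℝ)| := by
        have : (1 : ℤ) ≤ |k| := Int.one_le_abs hk0
        rw [← Int.cast_abs]
        exact_mod_cast this
      have hq2 : (2 : ℝ) / δ1 ≤ |(q : ℝ)| * |(k : ℝ)| := by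
        have h0 := mul_le_mul_of_nonneg_left hk1 (abs_nonneg (q : ℝ))
        rw [mul_one] at h0
        linarith
      calc 1 / (|(q : ℝ)| * |(k : ℝ)|) ≤ 1 / (2 / δ1) := by
            apply one_div_le_one_div_of_le (by positivity) hq2
        _ = δ1 / 2 := by field_simp
    have hmemF : (a : ℝ) / k ∈ F := by
      rw [hFdef, Finset.mem_image]
      refine ⟨(a, k), ?_, rfl⟩
      rw [Finset.mem_product, Finset.mem_Icc, Finset.mem_Icc]
      obtain ⟨h1, h2⟩ := abs_le.mp ha
      obtain ⟨h3, h4⟩ := abs_le.mp hkK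
      exact ⟨⟨h1, h2⟩, h3, h4⟩
    have hFd := hδ1 _ hmemF
    have htri : |x - (a : ℝ) / k| ≤ |x - (p : ℝ) / q| + |(p : ℝ) / q - (a : ℝ) / k| :=
      abs_sub_le _ _ _
    linarith [lt_of_lt_of_le hdist hrδ1]

theorem stmt17 (A : ℤ) (hA : 1 ≤ A) :
    IsNowhereDense {x : ℝ | ∃ p q : ℤ, 1 ≤ p ∧ q ≠ 0 ∧ x = (p : ℝ) / (q : ℝ) ∧
      ∃ a : ℤ, |a| ≤ A ∧ ∃ b : ℤ, (b = 1 ∨ b = -1) ∧ p ∣ (a * q - b)} := by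
  unfold IsNowhereDense
  have hsub : closure {x : ℝ | ∃ p q : ℤ, 1 ≤ p ∧ q ≠ 0 ∧ x = (p : ℝ) / (q : ℝ) ∧
      ∃ a : ℤ, |a| ≤ A ∧ ∃ b : ℤ, (b = 1 ∨ b = -1) ∧ p ∣ (a * q - b)} ⊆
      Set.range ((↑) : ℚ → ℝ) := by
    intro z hz
    by_contra h
    exact aux17 A hA z h hz
  have h1 : interior (Set.range ((↑) : ℚ → ℝ)) = ∅ := by
    rw [interior_eq_empty_iff_dense_compl]
    exact (Set.countable_range _).dense_compl ℝ
  have := interior_mono hsub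
  rw [h1] at this
  exact Set.eq_empty_of_subset_empty this
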